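/- Maximality of (eig, |coordinates|) for a Hermitian matrix plus rank-one pair: let T_b = U_b Λ U_b† and T̃_b = Ũ_b Λ Ũ_b† be Hermitian M×M matrices with the same eigenvalues, and let a, ã ∈ ℂ^M with |U_b† a| = |Ũ_b† ã| (entrywise). Then there exists a unitary matrix V ∈ U(M) such that V† T_b V = T̃_b and V† (a a†) V = ã ã†. -/

import Mathlib

open Matrix

lemma conj_vecMulVec {M : ℕ} (V : Matrix (Fin M) (Fin M) ℂ) (a : Fin M → ℂ) :
    Vᴴ * Matrix.vecMulVec a (star a) * V
      = Matrix.vecMulVec (Vᴴ.mulVec a) (star (Vᴴ.mulVec a)) := by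
  ext i j
  simp only [Matrix.mul_apply, Matrix.vecMulVec_apply, Matrix.conjTranspose_apply,
    Matrix.mulVec, dotProduct, Pi.star_apply, star_sum, star_mul', star_star,
    Finset.sum_mul, Finset.sum_mul_sum]
  rw [Finset.sum_comm]
  refine Finset.sum_congr rfl fun k _ => ?_
  rw [Finset.mul_sum]
  exact Finset.sum_congr rfl fun l _ => by ring

theorem stmt9 (M : ℕ) (d : Fin M → ℝ)
    (Ub Utb : Matrix (Fin M) (Fin M) ℂ)
    (hUb : Ub ∈ Matrix.unitaryGroup (Fin M) ℂ)
    (hUtb : Utb ∈ Matrix.unitaryGroup (Fin M) ℂ)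
    (a at' : Fin M → ℂ)
    (Tb Ttb : Matrix (Fin M) (Fin M) ℂ)
    (hTb : Tb = Ub * Matrix.diagonal (fun i => (d i : ℂ)) * Ubᴴ)
    (hTtb : Ttb = Utb * Matrix.diagonal (fun i => (d i : ℂ)) * Utbᴴ)
    (hmod : ∀ i, ‖(Ubᴴ.mulVec a) i‖ = ‖(Utbᴴ.mulVec at') i‖) :
    ∃ V : Matrix (Fin M) (Fin M) ℂ, V ∈ Matrix.unitaryGroup (Fin M) ℂ ∧
      Vᴴ * Tb * V = Ttb ∧
      Vᴴ * Matrix.vecMulVec a (star a) * V = Matrix.vecMulVec at' (star at') := by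
  set b : Fin M → ℂ := Ubᴴ.mulVec a with hb
  set c : Fin M → ℂ := Utbᴴ.mulVec at' with hc
  set e : Fin M → ℂ := fun i => if c i = 0 then 1 else b i / c i with he
  have habs : ∀ i, ‖e i‖ = 1 := by
    intro i
    by_cases h : c i = 0
    · simp [he, h]
    · simp only [he, if_neg h, norm_div]
      rw [hmod i]
      field_simp [norm_ne_zero_iff.mpr h]
  have hee : ∀ i, star (e i) * e i = 1 := by
    intro i
    rw [Complex.star_def, ← Complex.normSq_eq_conj_mul_self, ← Complex.sq_norm, habs i]
    norm_num
  have hcb : ∀ i, star (e i) * b i = c i := by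
    intro i
    by_cases h : c i = 0
    · have hb0 : b i = 0 := by
        have : ‖b i‖ = 0 := by rw [hmod i, h]; simp
        exact norm_eq_zero.mp this
      simp [he, h, hb0]
    · simp only [he, if_neg h]
      rw [Complex.star_def, map_div₀]
      have h2 : (starRingEnd ℂ) (b i) * b i = (starRingEnd ℂ) (c i) * c i := by
        rw [← Complex.normSq_eq_conj_mul_self, ← Complex.normSq_eq_conj_mul_self,
          ← Complex.sq_norm, ← Complex.sq_norm, hmod i]
      have hc' : (starRingEnd ℂ) (c i) ≠ 0 := by
        simpa using h
      field_simp
      linear_combination h2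
  set D : Matrix (Fin M) (Fin M) ℂ := Matrix.diagonal e with hD
  have hDu : D ∈ Matrix.unitaryGroup (Fin M) ℂ := by
    constructor
    · rw [Matrix.star_eq_conjTranspose, hD, Matrix.diagonal_conjTranspose,
        Matrix.diagonal_mul_diagonal]
      rw [← Matrix.diagonal_one]
      apply congrArg Matrix.diagonal
      funext i
      simpa using hee i
    · rw [Matrix.star_eq_conjTranspose, hD, Matrix.diagonal_conjTranspose,
        Matrix.diagonal_mul_diagonal]
      rw [← Matrix.diagonal_one]
      apply congrArg Matrix.diagonal
      funext i
      simpa [mul_comm] using hee i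
  have h1 : Ubᴴ * Ub = 1 := by
    rw [← Matrix.star_eq_conjTranspose]; exact hUb.1
  have h2 : Utb * Utbᴴ = 1 := by
    rw [← Matrix.star_eq_conjTranspose]; exact hUtb.2
  refine ⟨Ub * D * Utbᴴ, ?_, ?_, ?_⟩
  · exact mul_mem (mul_mem hUb hDu) (Unitary.star_mem hUtb)
  · rw [hTb, hTtb]
    have cancel : ∀ X : Matrix (Fin M) (Fin M) ℂ, Ubᴴ * (Ub * X) = X := by
      intro X; rw [← Matrix.mul_assoc, h1, one_mul]
    have key : Dᴴ * Matrix.diagonal (fun i => (d i : ℂ)) * D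
        = Matrix.diagonal (fun i => (d i : ℂ)) := by
      rw [hD, Matrix.diagonal_conjTranspose, Matrix.diagonal_mul_diagonal,
        Matrix.diagonal_mul_diagonal]
      apply congrArg Matrix.diagonal
      funext i
      simp only [Pi.mul_apply, Pi.star_apply]
      rw [mul_comm (star (e i)) ((d i : ℂ)), mul_assoc, hee i, mul_one]
    simp only [Matrix.conjTranspose_mul, Matrix.conjTranspose_conjTranspose,
      Matrix.mul_assoc]
    rw [cancel, cancel]
    rw [show Dᴴ * (Matrix.diagonal (fun i => (d i : ℂ)) * (D * Utbᴴ))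
        = (Dᴴ * Matrix.diagonal (fun i => (d i : ℂ)) * D) * Utbᴴ by
      simp only [Matrix.mul_assoc], key]
  · rw [conj_vecMulVec]
    have hv : (Ub * D * Utbᴴ)ᴴ.mulVec a = at' := by
      have hexp : (Ub * D * Utbᴴ)ᴴ = Utb * (Dᴴ * Ubᴴ) := by
        simp [Matrix.conjTranspose_mul, Matrix.mul_assoc]
      rw [hexp, ← Matrix.mulVec_mulVec, ← Matrix.mulVec_mulVec]
      have hDb : Dᴴ.mulVec b = c := by
        funext i
        rw [hD, Matrix.diagonal_conjTranspose]
        simp only [Matrix.mulVec_diagonal, Pi.star_apply]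
        exact hcb i
      rw [← hb, hDb, hc, Matrix.mulVec_mulVec, h2, Matrix.one_mulVec]
    rw [hv]
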